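/- If N and N' are semi-regular networks on the same finite leaf set X whose cluster multisets coincide (𝓜_N = 𝓜_{N'}), then N and N' are isomorphic via a digraph isomorphism fixing every element of X. In particular, every semi-regular network is the unique semi-regular network with its cluster multiset. -/

import Mathlib

namespace PhyloNet

/-- A (rooted) network on a set `X` of taxa: a finite directed acyclic graph with a
unique vertex of indegree 0 (the root), whose vertices of outdegree 0 (the leaves)
are exactly the elements of `X` (via the injection `leafEmb`). -/
structure Network (X : Type) where
  V : Type
  [fintypeV : Fintype V]
  E : V → V → Prop
  leafEmb : X → V
  leafEmb_inj : Function.Injective leafEmb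
  acyclic : ∀ u v : V, E u v → ¬ Relation.ReflTransGen E v u
  root_unique : ∃! r : V, ∀ u : V, ¬ E u r
  leaf_iff : ∀ v : V, (∀ w : V, ¬ E v w) ↔ ∃ x : X, leafEmb x = v

attribute [instance] Network.fintypeV

variable {X : Type}

namespace Network

/-- `reach u v` : there is a directed path (possibly trivial) from `u` to `v`,
i.e. `v ⪯ u`. -/
def reach (N : Network X) : N.V → N.V → Prop := Relation.ReflTransGen N.E

/-- The cluster of a vertex: the set of leaves reachable from it. -/
def cluster (N : Network X) (v : N.V) : Set X := {x | N.reach v (N.leafEmb x)}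

/-- The clustering system of a network. -/
def CS (N : Network X) : Set (Set X) := Set.range N.cluster

noncomputable def inDeg (N : Network X) (v : N.V) : ℕ := {u | N.E u v}.ncard
noncomputable def outDeg (N : Network X) (v : N.V) : ℕ := {w | N.E v w}.ncard

def IsHybrid (N : Network X) (v : N.V) : Prop := 1 < N.inDeg v
def IsTreeVertex (N : Network X) (v : N.V) : Prop := N.inDeg v ≤ 1
def IsLeaf (N : Network X) (v : N.V) : Prop := ∀ w : N.V, ¬ N.E v w

/-- The arc `(u,w)` is a shortcut: `w ≺ v` for some child `v ≠ w` of `u`. -/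
def IsShortcut (N : Network X) (u w : N.V) : Prop :=
  N.E u w ∧ ∃ v : N.V, N.E u v ∧ v ≠ w ∧ N.reach v w

def ShortcutFree (N : Network X) : Prop := ∀ u w : N.V, ¬ N.IsShortcut u w

/-- Path-cluster comparability. -/
def PCC (N : Network X) : Prop :=
  ∀ u v : N.V, (N.reach u v ∨ N.reach v u) ↔
    (N.cluster u ⊆ N.cluster v ∨ N.cluster v ⊆ N.cluster u)

def SemiRegular (N : Network X) : Prop := N.ShortcutFree ∧ N.PCC

/-- `N` is regular iff `v ↦ C(v)` is a digraph isomorphism onto the Hasse diagram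
of `𝒞_N` (ordered by inclusion). -/
def Regular (N : Network X) : Prop :=
  Function.Injective N.cluster ∧
  ∀ u v : N.V, N.E u v ↔
    (N.cluster v ⊂ N.cluster u ∧
      ¬ ∃ w : N.V, N.cluster v ⊂ N.cluster w ∧ N.cluster w ⊂ N.cluster u)

def Separated (N : Network X) : Prop := ∀ v : N.V, N.IsHybrid v → N.outDeg v = 1

def Phylogenetic (N : Network X) : Prop := ¬ ∃ v : N.V, N.outDeg v = 1 ∧ N.inDeg v ≤ 1

def Binary (N : Network X) : Prop :=
  (∀ v : N.V, N.IsTreeVertex v → (N.IsLeaf v ∨ N.outDeg v = 2)) ∧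
  (∀ v : N.V, N.IsHybrid v → N.inDeg v = 2 ∧ N.outDeg v = 1)

def TreeChild (N : Network X) : Prop :=
  ∀ v : N.V, ¬ N.IsLeaf v → ∃ u : N.V, N.E v u ∧ N.inDeg u = 1

/-- The underlying undirected (simple) graph of a network. -/
def UG (N : Network X) : SimpleGraph N.V where
  Adj u v := u ≠ v ∧ (N.E u v ∨ N.E v u)
  symm := ⟨fun _ _ h => ⟨Ne.symm h.1, Or.symm h.2⟩⟩
  loopless := ⟨fun _ h => h.1 rfl⟩

/-- A set of vertices is biconnected if it induces a connected undirected graph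
with no cutvertex. -/
def IsBiconn (N : Network X) (B : Set N.V) : Prop :=
  (N.UG.induce B).Connected ∧ ∀ v ∈ B, (N.UG.induce (B \ {v})).Preconnected

/-- A block: a maximal biconnected set of vertices. -/
def IsBlock (N : Network X) (B : Set N.V) : Prop :=
  N.IsBiconn B ∧ ∀ B' : Set N.V, B ⊆ B' → N.IsBiconn B' → B' = B

/-- The set `B` contains an undirected cycle (`B` is a non-trivial block when it is
a block). -/
def HasCycleIn (N : Network X) (B : Set N.V) : Prop :=
  ∃ (v : N.V) (c : N.UG.Walk v v), c.IsCycle ∧ ∀ w ∈ c.support, w ∈ B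

/-- Level-1: each block contains at most one hybrid vertex that is not
`⪯`-maximal in the block. -/
def Level1 (N : Network X) : Prop :=
  ∀ B : Set N.V, N.IsBlock B →
    Set.Subsingleton {v : N.V | v ∈ B ∧ N.IsHybrid v ∧ ∃ u ∈ B, u ≠ v ∧ N.reach u v}

/-- The set `B` (with the edges of the underlying undirected graph between its
members) is exactly an undirected cycle. -/
def IsCycleSet (N : Network X) (B : Set N.V) : Prop :=
  ∃ (v : N.V) (c : N.UG.Walk v v), c.IsCycle ∧ (∀ w : N.V, w ∈ c.support ↔ w ∈ B) ∧
    ∀ u w : N.V, (N.UG.Adj u w ∧ u ∈ B ∧ w ∈ B) ↔ s(u, w) ∈ c.edges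

/-- A galled tree: every non-trivial block is an undirected cycle. -/
def GalledTree (N : Network X) : Prop :=
  ∀ B : Set N.V, N.IsBlock B → N.HasCycleIn B → N.IsCycleSet B

/-- Quasi-binary: hybrid vertices have indegree 2 and outdegree 1, and the
`⪯`-maximal vertex of every non-trivial block has outdegree 2. -/
def QuasiBinary (N : Network X) : Prop :=
  (∀ v : N.V, N.IsHybrid v → N.inDeg v = 2 ∧ N.outDeg v = 1) ∧
  ∀ B : Set N.V, N.IsBlock B → N.HasCycleIn B →
    ∀ v ∈ B, (∀ u ∈ B, N.reach u v → u = v) → N.outDeg v = 2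

/-- `LCA A`: the `⪯`-minimal vertices among the common ancestors of `A`. -/
def LCA (N : Network X) (A : Set X) : Set N.V :=
  {v : N.V | A ⊆ N.cluster v ∧ ∀ u : N.V, A ⊆ N.cluster u → N.reach v u → u = v}

/-- An lca-network: every nonempty set of leaves has a unique least common
ancestor. -/
def LcaNetwork (N : Network X) : Prop :=
  ∀ A : Set X, A.Nonempty → ∃ v : N.V, N.LCA A = {v}

/-- A strong lca-network. -/
def StrongLca (N : Network X) : Prop :=
  N.LcaNetwork ∧
  ∀ A : Set X, A.Nonempty → ∃ x ∈ A, ∃ y ∈ A, N.LCA ({x, y} : Set X) = N.LCA A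

/-- Cluster networks in the sense of Huson & Rupp. -/
def ClusterNetwork (N : Network X) : Prop :=
  N.PCC ∧
  (∀ u v : N.V, N.cluster u = N.cluster v ↔
    (u = v ∨ (N.IsHybrid v ∧ N.E v u) ∨ (N.IsHybrid u ∧ N.E u v))) ∧
  (∀ u v : N.V, N.E v u →
    ¬ ∃ w : N.V, N.cluster u ⊂ N.cluster w ∧ N.cluster w ⊂ N.cluster v) ∧
  (∀ v : N.V, N.IsHybrid v →
    ∃ u : N.V, N.E v u ∧ (∀ w : N.V, N.E v w → w = u) ∧ N.IsTreeVertex u)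

/-- The multiplicity of a cluster in the cluster multiset `𝓜_N`. -/
noncomputable def multiplicity (N : Network X) (C : Set X) : ℕ :=
  Nat.card {v : N.V // N.cluster v = C}

/-- Isomorphism of networks on the same leaf set `X`, fixing every leaf. -/
def Isomorphic (N N' : Network X) : Prop :=
  ∃ φ : N.V ≃ N'.V, (∀ u v : N.V, N.E u v ↔ N'.E (φ u) (φ v)) ∧
    ∀ x : X, φ (N.leafEmb x) = N'.leafEmb x

end Network

/-- A clustering system on `X`. -/
def IsClusteringSystem {X : Type} (𝒞 : Set (Set X)) : Prop :=
  ∅ ∉ 𝒞 ∧ Set.univ ∈ 𝒞 ∧ ∀ x : X, {x} ∈ 𝒞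

/-- Two sets overlap if `A ∩ B ∉ {∅, A, B}`. -/
def Overlap {X : Type} (A B : Set X) : Prop :=
  (A ∩ B).Nonempty ∧ A ∩ B ≠ A ∧ A ∩ B ≠ B

/-- Closed (under pairwise nonempty intersections). -/
def IsClosedCS {X : Type} (𝒞 : Set (Set X)) : Prop :=
  ∀ A ∈ 𝒞, ∀ B ∈ 𝒞, (A ∩ B).Nonempty → A ∩ B ∈ 𝒞

/-- Property (L). -/
def PropertyL {X : Type} (𝒞 : Set (Set X)) : Prop :=
  ∀ C₁ ∈ 𝒞, ∀ C₂ ∈ 𝒞, ∀ C₃ ∈ 𝒞, Overlap C₁ C₂ → Overlap C₁ C₃ → C₁ ∩ C₂ = C₁ ∩ C₃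

/-- Weak hierarchy. -/
def WeakHierarchy {X : Type} (𝒞 : Set (Set X)) : Prop :=
  ∀ C₁ ∈ 𝒞, ∀ C₂ ∈ 𝒞, ∀ C₃ ∈ 𝒞,
    C₁ ∩ C₂ ∩ C₃ = C₁ ∩ C₂ ∨ C₁ ∩ C₂ ∩ C₃ = C₁ ∩ C₃ ∨
    C₁ ∩ C₂ ∩ C₃ = C₂ ∩ C₃ ∨ C₁ ∩ C₂ ∩ C₃ = ∅

/-- Property (N3O): no three distinct pairwise overlapping clusters. -/
def N3O {X : Type} (𝒞 : Set (Set X)) : Prop :=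
  ¬ ∃ C₁ ∈ 𝒞, ∃ C₂ ∈ 𝒞, ∃ C₃ ∈ 𝒞,
    C₁ ≠ C₂ ∧ C₁ ≠ C₃ ∧ C₂ ≠ C₃ ∧ Overlap C₁ C₂ ∧ Overlap C₁ C₃ ∧ Overlap C₂ C₃

/-- Property (2-Inc). -/
def TwoInc {X : Type} (𝒞 : Set (Set X)) : Prop :=
  ∀ C ∈ 𝒞,
    {A : Set X | A ∈ 𝒞 ∧ A ⊂ C ∧ ∀ B ∈ 𝒞, B ⊂ C → A ⊆ B → A = B}.ncard ≤ 2 ∧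
    {A : Set X | A ∈ 𝒞 ∧ C ⊂ A ∧ ∀ B ∈ 𝒞, C ⊂ B → B ⊆ A → A = B}.ncard ≤ 2

/-- The intersection closure: all nonempty intersections of nonempty subfamilies. -/
def interClosure {X : Type} (𝒞 : Set (Set X)) : Set (Set X) :=
  {A : Set X | A.Nonempty ∧ ∃ S : Set (Set X), S ⊆ 𝒞 ∧ S.Nonempty ∧ A = ⋂₀ S}

section Aux

open Relation

variable {Y : Type} (N : Network Y)

lemma reach_antisymm {u v : N.V} (h1 : N.reach u v) (h2 : N.reach v u) : u = v := by
  rcases h1.cases_head with rfl | ⟨w, hw, hwv⟩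
  · rfl
  · exact absurd (hwv.trans h2) (N.acyclic u w hw)

lemma cluster_mono {u v : N.V} (h : N.reach u v) : N.cluster v ⊆ N.cluster u :=
  fun _ hx => h.trans hx

/-- The "rank set" of a vertex: same-cluster vertices weakly below it. -/
def rkSet (v : N.V) : Set N.V := {u | N.cluster u = N.cluster v ∧ N.reach v u}

noncomputable def rk (v : N.V) : ℕ := (rkSet N v).ncard

lemma self_mem_rkSet (v : N.V) : v ∈ rkSet N v := ⟨rfl, ReflTransGen.refl⟩

lemma rkSet_subset {u v : N.V} (hc : N.cluster u = N.cluster v) (h : N.reach v u) :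
    rkSet N u ⊆ rkSet N v := fun w hw => ⟨hw.1.trans hc, h.trans hw.2⟩

lemma rk_lt {u v : N.V} (hc : N.cluster u = N.cluster v) (h : N.reach v u) (hne : u ≠ v) :
    rk N u < rk N v := by
  apply Set.ncard_lt_ncard _ (Set.toFinite _)
  refine ⟨rkSet_subset N hc h, fun hsub => ?_⟩
  have hm := hsub (self_mem_rkSet N v)
  exact hne (reach_antisymm N hm.2 h)

lemma comparable_of_cluster_eq (hP : N.PCC) {u v : N.V} (hc : N.cluster u = N.cluster v) :
    N.reach u v ∨ N.reach v u :=
  (hP u v).mpr (Or.inl hc.subset)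

lemma rk_inj (hP : N.PCC) {u v : N.V} (hc : N.cluster u = N.cluster v)
    (hr : rk N u = rk N v) : u = v := by
  by_contra hne
  rcases comparable_of_cluster_eq N hP hc with h | h
  · have := rk_lt N hc.symm h (fun e => hne e.symm)
    omega
  · have := rk_lt N hc h hne
    omega

lemma rk_le_of_reach {u v : N.V} (hc : N.cluster u = N.cluster v) (h : N.reach v u) :
    rk N u ≤ rk N v :=
  Set.ncard_le_ncard (rkSet_subset N hc h) (Set.toFinite _)

lemma reach_of_rk_le (hP : N.PCC) {u v : N.V} (hc : N.cluster u = N.cluster v)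
    (h : rk N u ≤ rk N v) : N.reach v u := by
  rcases comparable_of_cluster_eq N hP hc with h' | h'
  · have h2 := rk_le_of_reach N hc.symm h'
    have : u = v := rk_inj N hP hc (le_antisymm h h2)
    exact this ▸ ReflTransGen.refl
  · exact h'

lemma reach_of_ssubset (hP : N.PCC) {u v : N.V} (h : N.cluster v ⊂ N.cluster u) :
    N.reach u v := by
  rcases (hP u v).mpr (Or.inr h.subset) with h' | h'
  · exact h'
  · exact absurd (cluster_mono N h') h.not_subset

lemma reach_char (hP : N.PCC) (u v : N.V) :
    N.reach u v ↔
      (N.cluster v ⊂ N.cluster u ∨ (N.cluster v = N.cluster u ∧ rk N v ≤ rk N u)) := by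
  constructor
  · intro h
    have hsub := cluster_mono N h
    by_cases he : N.cluster v = N.cluster u
    · exact Or.inr ⟨he, rk_le_of_reach N he h⟩
    · exact Or.inl ⟨hsub, fun h2 => he (hsub.antisymm h2)⟩
  · rintro (h | ⟨h1, h2⟩)
    · exact reach_of_ssubset N hP h
    · exact reach_of_rk_le N hP h1 h2

/-- Covering relation of the reachability order. -/
def Cov (u v : N.V) : Prop :=
  N.reach u v ∧ u ≠ v ∧ ¬ ∃ z : N.V, z ≠ u ∧ z ≠ v ∧ N.reach u z ∧ N.reach z v

lemma edge_iff_cov (hS : N.ShortcutFree) (u v : N.V) : N.E u v ↔ Cov N u v := by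
  constructor
  · intro h
    refine ⟨ReflTransGen.single h, ?_, ?_⟩
    · rintro rfl
      exact N.acyclic u u h ReflTransGen.refl
    · rintro ⟨z, hzu, hzv, huz, hzv'⟩
      rcases huz.cases_head with rfl | ⟨w, hw, hwz⟩
      · exact hzu rfl
      · by_cases hwv : w = v
        · subst hwv
          exact hzv (reach_antisymm N hzv' hwz)
        · exact hS u v ⟨h, w, hw, hwv, hwz.trans hzv'⟩
  · rintro ⟨h1, h2, h3⟩
    rcases h1.cases_head with rfl | ⟨w, hw, hwv⟩
    · exact absurd rfl h2
    · by_cases hwv' : w = v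
      · exact hwv' ▸ hw
      · exfalso
        apply h3
        refine ⟨w, ?_, hwv', ReflTransGen.single hw, hwv⟩
        rintro rfl
        exact N.acyclic w w hw ReflTransGen.refl

lemma one_le_rk (v : N.V) : 1 ≤ rk N v :=
  (Set.ncard_pos (Set.toFinite _)).mpr ⟨v, self_mem_rkSet N v⟩

lemma rk_le_mult (v : N.V) : rk N v ≤ N.multiplicity (N.cluster v) := by
  have hm : N.multiplicity (N.cluster v)
      = ({u | N.cluster u = N.cluster v} : Set N.V).ncard := by
    rw [Network.multiplicity, ← Nat.card_coe_set_eq]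
    exact Nat.card_congr (Equiv.subtypeEquivRight fun _ => Iff.rfl)
  rw [hm]
  exact Set.ncard_le_ncard (fun w hw => hw.1) (Set.toFinite _)

lemma exists_rk (hP : N.PCC) (C : Set Y) (k : ℕ) (h1 : 1 ≤ k)
    (h2 : k ≤ N.multiplicity C) : ∃ v : N.V, N.cluster v = C ∧ rk N v = k := by
  set m := N.multiplicity C with hm
  have hm1 : 1 ≤ m := le_trans h1 h2
  have hcard : Nat.card {v : N.V // N.cluster v = C} = m := rfl
  have hf : ∀ v : {v : N.V // N.cluster v = C}, rk N v.1 - 1 < m := by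
    intro v
    have h3 := rk_le_mult N v.1
    rw [v.2] at h3
    have h4 := one_le_rk N v.1
    omega
  let f : {v : N.V // N.cluster v = C} → Fin m := fun v => ⟨rk N v.1 - 1, hf v⟩
  have hinj : Function.Injective f := by
    intro a b hab
    have hv : rk N a.1 - 1 = rk N b.1 - 1 := congrArg Fin.val hab
    have h1a := one_le_rk N a.1
    have h1b := one_le_rk N b.1
    exact Subtype.ext (rk_inj N hP (a.2.trans b.2.symm) (by omega))
  have hsurj : Function.Surjective f :=
    ((Nat.bijective_iff_injective_and_card f).mpr ⟨hinj, by simpa [Nat.card_eq_fintype_card] using hcard⟩).2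
  obtain ⟨v, hv⟩ := hsurj ⟨k - 1, by omega⟩
  refine ⟨v.1, v.2, ?_⟩
  have hval : rk N v.1 - 1 = k - 1 := congrArg Fin.val hv
  have := one_le_rk N v.1
  omega

lemma cluster_leaf (x : Y) : N.cluster (N.leafEmb x) = {x} := by
  have hl : ∀ w, ¬ N.E (N.leafEmb x) w := (N.leaf_iff _).mpr ⟨x, rfl⟩
  ext y
  simp only [Network.cluster, Set.mem_setOf_eq, Set.mem_singleton_iff]
  constructor
  · intro h
    rcases Relation.ReflTransGen.cases_head h with he | ⟨w, hw, _⟩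
    · exact (N.leafEmb_inj he).symm
    · exact absurd hw (hl w)
  · rintro rfl
    exact ReflTransGen.refl

lemma rk_leaf (x : Y) : rk N (N.leafEmb x) = 1 := by
  have hl : ∀ w, ¬ N.E (N.leafEmb x) w := (N.leaf_iff _).mpr ⟨x, rfl⟩
  have hset : rkSet N (N.leafEmb x) = {N.leafEmb x} := by
    ext u
    simp only [Set.mem_singleton_iff]
    constructor
    · rintro ⟨_, h2⟩
      rcases Relation.ReflTransGen.cases_head h2 with he | ⟨w, hw, _⟩
      · exact he.symm
      · exact absurd hw (hl w)
    · rintro rfl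
      exact self_mem_rkSet N _
  rw [rk, hset, Set.ncard_singleton]

end Aux

/-- Semi-regular networks with the same cluster multiset are
isomorphic (via an isomorphism fixing every leaf); i.e., semi-regular networks
are encoded by their cluster multisets. -/
theorem semiRegular_encoded_by_cluster_multiset (X : Type) [Fintype X]
    (N N' : Network X) (hN : N.SemiRegular) (hN' : N'.SemiRegular)
    (hM : ∀ C : Set X, N.multiplicity C = N'.multiplicity C) :
    N.Isomorphic N' := by
  obtain ⟨hS, hP⟩ := hN
  obtain ⟨hS', hP'⟩ := hN'
  have hex : ∀ v : N.V, ∃ v' : N'.V, N'.cluster v' = N.cluster v ∧ rk N' v' = rk N v :=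
    fun v => exists_rk N' hP' _ _ (one_le_rk N v) (by rw [← hM]; exact rk_le_mult N v)
  have hex' : ∀ v' : N'.V, ∃ v : N.V, N.cluster v = N'.cluster v' ∧ rk N v = rk N' v' :=
    fun v' => exists_rk N hP _ _ (one_le_rk N' v') (by rw [hM]; exact rk_le_mult N' v')
  choose F hF1 hF2 using hex
  choose G hG1 hG2 using hex'
  have hGF : ∀ v, G (F v) = v := fun v =>
    rk_inj N hP ((hG1 _).trans (hF1 _)) ((hG2 _).trans (hF2 _))
  have hFG : ∀ v', F (G v') = v' := fun v' =>
    rk_inj N' hP' ((hF1 _).trans (hG1 _)) ((hF2 _).trans (hG2 _))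
  have hreach : ∀ u v : N.V, N.reach u v ↔ N'.reach (F u) (F v) := by
    intro u v
    rw [reach_char N hP, reach_char N' hP', hF1, hF1, hF2, hF2]
  have hne : ∀ u v : N.V, u ≠ v → F u ≠ F v := by
    intro u v h he
    exact h (by rw [← hGF u, ← hGF v, he])
  refine ⟨⟨F, G, hGF, hFG⟩, fun u v => ?_, fun x => ?_⟩
  · show N.E u v ↔ N'.E (F u) (F v)
    rw [edge_iff_cov N hS, edge_iff_cov N' hS']
    constructor
    · rintro ⟨h1, h2, h3⟩
      refine ⟨(hreach u v).mp h1, hne u v h2, ?_⟩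
      rintro ⟨z', hz1, hz2, hz3, hz4⟩
      apply h3
      refine ⟨G z', fun he => hz1 ?_, fun he => hz2 ?_, ?_, ?_⟩
      · rw [← hFG z', he]
      · rw [← hFG z', he]
      · exact (hreach u (G z')).mpr (by rw [hFG]; exact hz3)
      · exact (hreach (G z') v).mpr (by rw [hFG]; exact hz4)
    · rintro ⟨h1, h2, h3⟩
      refine ⟨(hreach u v).mpr h1, fun he => h2 (he ▸ rfl), ?_⟩
      rintro ⟨z, hz1, hz2, hz3, hz4⟩
      exact h3 ⟨F z, hne z u hz1, hne z v hz2, (hreach u z).mp hz3, (hreach z v).mp hz4⟩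
  · show F (N.leafEmb x) = N'.leafEmb x
    refine rk_inj N' hP' ?_ ?_
    · rw [hF1, cluster_leaf N, cluster_leaf N']
    · rw [hF2, rk_leaf N, rk_leaf N']

end PhyloNet
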